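/- Let 0 < ε < 1/9 and let p, q ∈ ℝ² be distinct points. Then every point q' ∈ W₁ \ W₂ satisfies ‖p − q'‖ ≤ 2·‖p − q‖. -/

import Mathlib

open InnerProductGeometry Real

/-- The cone `W₁` with apex `p`, axis direction `q - p`, and aperture `√ε/2`. -/
def W1 (ε : ℝ) (p q : EuclideanSpace ℝ (Fin 2)) : Set (EuclideanSpace ℝ (Fin 2)) :=
  {x | x = p ∨ InnerProductGeometry.angle (x - p) (q - p) ≤ Real.sqrt ε / 4}

/-- The cone `W₂` with apex `q`, axis direction `q - p`, and aperture `√ε`. -/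
def W2 (ε : ℝ) (p q : EuclideanSpace ℝ (Fin 2)) : Set (EuclideanSpace ℝ (Fin 2)) :=
  {x | x = q ∨ InnerProductGeometry.angle (x - q) (q - p) ≤ Real.sqrt ε / 2}

/-- Every point `q' ∈ W₁ \ W₂` satisfies `‖p - q'‖ ≤ 2·‖p - q‖`. -/
theorem norm_le_of_mem_W1_diff_W2 (ε : ℝ) (hε0 : 0 < ε) (hε1 : ε < 1 / 9)
    (p q : EuclideanSpace ℝ (Fin 2)) (hpq : p ≠ q)
    (q' : EuclideanSpace ℝ (Fin 2)) (hq' : q' ∈ W1 ε p q \ W2 ε p q) :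
    ‖p - q'‖ ≤ 2 * ‖p - q‖ := by
  obtain ⟨h1, h2⟩ := hq'
  simp only [W1, Set.mem_setOf_eq] at h1
  simp only [W2, Set.mem_setOf_eq, not_or, not_le] at h2
  obtain ⟨hq'q, hθ⟩ := h2
  rcases h1 with rfl | hα
  · simp only [sub_self, norm_zero]
    positivity
  by_contra hcon
  push_neg at hcon
  set u : EuclideanSpace ℝ (Fin 2) := q - p with hu_def
  set v : EuclideanSpace ℝ (Fin 2) := q' - p with hv_def
  have hvu : v - u = q' - q := by rw [hu_def, hv_def]; abel
  have hu : u ≠ 0 := sub_ne_zero.mpr (Ne.symm hpq)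
  have hnu : (0:ℝ) < ‖u‖ := norm_pos_iff.mpr hu
  have hnv_eq : ‖p - q'‖ = ‖v‖ := by rw [hv_def, norm_sub_rev]
  have hnu_eq : ‖p - q‖ = ‖u‖ := by rw [hu_def, norm_sub_rev]
  rw [hnv_eq, hnu_eq] at hcon
  have hnv : (0:ℝ) < ‖v‖ := lt_trans (by positivity) hcon
  have hv : v ≠ 0 := norm_pos_iff.mp hnv
  have hw : v - u ≠ 0 := by rw [hvu]; exact sub_ne_zero.mpr hq'q
  have hnw : (0:ℝ) < ‖v - u‖ := norm_pos_iff.mpr hw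
  have hnw_ge : ‖u‖ < ‖v - u‖ := by
    have := norm_sub_norm_le v u
    have h3 := abs_le.mp (abs_norm_sub_norm_le v u)
    linarith
  -- sqrt ε bounds
  have hsε : Real.sqrt ε < 1/3 := by
    have : Real.sqrt ε < Real.sqrt (1/9) := Real.sqrt_lt_sqrt hε0.le hε1
    rwa [show (1:ℝ)/9 = (1/3)^2 by norm_num, Real.sqrt_sq (by norm_num)] at this
  -- angles
  set α := angle v u with hα_def
  set γ := angle v (v - u) with hγ_def
  have hαv : angle (q' - p) (q - p) = α := by rw [hα_def]
  have hα' : α ≤ Real.sqrt ε / 4 := hαv ▸ hα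
  have hθv : angle (q' - q) (q - p) = angle (v - u) u := by rw [hvu]
  have hθ' : Real.sqrt ε / 2 < angle (v - u) u := hθv ▸ hθ
  -- angle sum
  have hsum : angle u v + angle u (u - v) + angle v (v - u) = π :=
    angle_add_angle_sub_add_angle_sub_eq_pi u hv
  have hneg : angle u (u - v) = π - angle u (v - u) := by
    rw [show u - v = -(v - u) by abel, angle_neg_right]
  have hθeq : angle (v - u) u = α + γ := by
    rw [angle_comm (v - u) u]
    rw [hneg, angle_comm u v] at hsum
    linarith
  -- sine relation
  have hsin1 := sin_angle_mul_norm_mul_norm v u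
  have hsin2 := sin_angle_mul_norm_mul_norm v (v - u)
  have hrad : (inner ℝ v v : ℝ) * inner ℝ (v - u) (v - u) - inner ℝ v (v - u) * inner ℝ v (v - u)
      = (inner ℝ v v : ℝ) * inner ℝ u u - inner ℝ v u * inner ℝ v u := by
    simp only [inner_sub_left, inner_sub_right, real_inner_comm u v]
    ring
  have hsin_eq : Real.sin γ * (‖v‖ * ‖v - u‖) = Real.sin α * (‖v‖ * ‖u‖) := by
    rw [hγ_def, hα_def, hsin1, hsin2, hrad]
  have hsinγ_nonneg : 0 ≤ Real.sin γ := Real.sin_nonneg_of_nonneg_of_le_pi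
    (angle_nonneg _ _) (angle_le_pi _ _)
  have hsin_le : Real.sin γ ≤ Real.sin α := by
    have h1 : Real.sin γ * (‖v‖ * ‖u‖) ≤ Real.sin γ * (‖v‖ * ‖v - u‖) :=
      mul_le_mul_of_nonneg_left
        (mul_le_mul_of_nonneg_left hnw_ge.le (norm_nonneg v)) hsinγ_nonneg
    exact le_of_mul_le_mul_right (h1.trans_eq hsin_eq) (by positivity)
  -- γ is acute
  have hcosγ := cos_angle_mul_norm_mul_norm v (v - u)
  have hinner_pos : (0:ℝ) < (inner ℝ v (v - u) : ℝ) := by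
    have h1 : (inner ℝ v u : ℝ) ≤ ‖v‖ * ‖u‖ := real_inner_le_norm v u
    have h2 : (inner ℝ v v : ℝ) = ‖v‖ * ‖v‖ := real_inner_self_eq_norm_mul_norm v
    rw [inner_sub_right, h2]
    have h4 : ‖u‖ < ‖v‖ := by linarith
    have h3 : ‖v‖ * ‖u‖ < ‖v‖ * ‖v‖ := mul_lt_mul_of_pos_left h4 hnv
    linarith
  have hcosγ_pos : 0 < Real.cos γ := by
    have h0 : 0 < Real.cos γ * (‖v‖ * ‖v - u‖) := by
      rw [hγ_def, hcosγ]; exact hinner_pos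
    by_contra hc
    push_neg at hc
    have := mul_nonpos_of_nonpos_of_nonneg hc (by positivity : (0:ℝ) ≤ ‖v‖ * ‖v - u‖)
    linarith
  have hγ_lt : γ < π / 2 := by
    by_contra hc
    push_neg at hc
    have : Real.cos γ ≤ 0 := Real.cos_nonpos_of_pi_div_two_le_of_le hc
      (by linarith [angle_le_pi v (v - u), Real.pi_pos])
    linarith
  have hα_lt : α < π / 2 := by
    have := Real.pi_gt_three
    linarith [hα']
  -- conclude γ ≤ α
  have hγα : γ ≤ α := by
    by_contra hc
    push_neg at hc
    have := Real.strictMonoOn_sin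
      ⟨by linarith [angle_nonneg v u, Real.pi_pos], hα_lt.le⟩
      ⟨by linarith [angle_nonneg v (v - u), Real.pi_pos], hγ_lt.le⟩ hc
    linarith
  rw [hθeq] at hθ'
  linarith
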